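/- For q ∈ ℂ[u, t, t⁻¹], the operator q·(t∂_t) maps A into A if and only if q ∈ A. (Part 2 of the Lemma on derivations of the cone; t∂_t corresponds to the angular derivation ∂_θ under t = e^{iθ}.) -/

import Mathlib

/-- The ring `ℂ[u, t, t⁻¹]` of polynomials in `u` that are Laurent polynomials
in `t`, realized as the monoid algebra of `ℕ × ℤ` over `ℂ`. -/
abbrev PolyLaurent : Type := AddMonoidAlgebra ℂ (ℕ × ℤ)

/-- The monomial `uⁿ tᵐ` in `ℂ[u, t, t⁻¹]`. -/
noncomputable def mono (n : ℕ) (m : ℤ) : PolyLaurent :=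
  AddMonoidAlgebra.single (n, m) 1

/-- The coordinate ring `A` of the double cone `z² = x² + y²`: the subalgebra
of `ℂ[u, t, t⁻¹]` generated by `u`, `u·t` and `u·t⁻¹` (after the complex
rotation `x+iy, x−iy, z ↦ ut, ut⁻¹, u`). -/
noncomputable def coneA : Subalgebra ℂ PolyLaurent :=
  Algebra.adjoin ℂ {mono 1 0, mono 1 1, mono 1 (-1)}

/-- The derivation `t∂_t` of `ℂ[u, t, t⁻¹]`, sending `uⁿtᵐ` to `m·uⁿtᵐ`
(the angular derivation `∂_θ` under `t = e^{iθ}`). -/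
noncomputable def tdt : PolyLaurent →ₗ[ℂ] PolyLaurent :=
  (Finsupp.lsum ℂ fun (p : ℕ × ℤ) => (p.2 : ℂ) • (AddMonoidAlgebra.lsingle p : ℂ →ₗ[ℂ] PolyLaurent)) ∘ₗ
    (AddMonoidAlgebra.coeffLinearEquiv ℂ : PolyLaurent ≃ₗ[ℂ] ((ℕ × ℤ) →₀ ℂ)).toLinearMap

/-- The "good" subalgebra: elements supported on the cone `|m| ≤ n`. -/
noncomputable def goodA : Subalgebra ℂ PolyLaurent where
  carrier := {x | ∀ p ∈ x.coeff.support, p.2.natAbs ≤ p.1}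
  add_mem' {a b} ha hb p hp := by
    rcases Finset.mem_union.1 (Finsupp.support_add hp) with h | h
    · exact ha p h
    · exact hb p h
  mul_mem' {a b} ha hb p hp := by
    classical
    have := AddMonoidAlgebra.support_coeff_mul_subset a b hp
    rw [Finset.mem_add] at this
    obtain ⟨x, hx, y, hy, rfl⟩ := this
    have h1 := ha x hx
    have h2 := hb y hy
    have : (x.2 + y.2).natAbs ≤ x.2.natAbs + y.2.natAbs := Int.natAbs_add_le _ _
    simp only [Prod.fst_add, Prod.snd_add]
    omega
  one_mem' p hp := by
    have : p ∈ ({((0 : ℕ), (0 : ℤ))} : Finset (ℕ × ℤ)) := by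
      refine Finsupp.support_single_subset hp
    simp_all
  algebraMap_mem' r p hp := by
    have : p ∈ ({((0 : ℕ), (0 : ℤ))} : Finset (ℕ × ℤ)) := by
      refine Finsupp.support_single_subset hp
    simp_all

lemma mono_mul (a : ℕ) (b : ℤ) (c : ℕ) (d : ℤ) :
    mono a b * mono c d = mono (a + c) (b + d) := by
  simp [mono, AddMonoidAlgebra.single_mul_single, Prod.mk_add_mk]

lemma mono_one_pow (s : ℤ) (k : ℕ) : (mono 1 s) ^ k = mono k (k * s) := by
  induction k with
  | zero => simp [mono]; rfl
  | succ n ih =>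
    rw [pow_succ, ih, mono_mul]
    congr 1
    push_cast
    ring

lemma mono_mem {n : ℕ} {m : ℤ} (h : m.natAbs ≤ n) : mono n m ∈ coneA := by
  have h10 : mono 1 0 ∈ coneA := Algebra.subset_adjoin (by simp)
  have h11 : mono 1 1 ∈ coneA := Algebra.subset_adjoin (by simp)
  have h1n : mono 1 (-1) ∈ coneA := Algebra.subset_adjoin (by simp)
  set k := m.natAbs with hk
  have hsplit : mono n m = mono k m * mono (n - k) 0 := by
    rw [mono_mul, add_zero]
    congr 1
    omega
  rw [hsplit]
  apply mul_mem
  · rcases Int.natAbs_eq m with he | he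
    · have : mono k m = (mono 1 1) ^ k := by
        rw [mono_one_pow]; congr 1; omega
      rw [this]; exact pow_mem h11 k
    · have : mono k m = (mono 1 (-1)) ^ k := by
        rw [mono_one_pow]; congr 1; omega
      rw [this]; exact pow_mem h1n k
  · have : mono (n - k) 0 = (mono 1 0) ^ (n - k) := by
      rw [mono_one_pow]; simp
    rw [this]; exact pow_mem h10 (n - k)

lemma good_mem_coneA {x : PolyLaurent} (hx : x ∈ goodA) : x ∈ coneA := by
  have hsum : x = ∑ p ∈ x.coeff.support, AddMonoidAlgebra.single p (x.coeff p) := by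
    exact (AddMonoidAlgebra.sum_coeff_single x).symm
  rw [hsum]
  refine sum_mem fun p hp => ?_
  have : (AddMonoidAlgebra.single p (x.coeff p) : PolyLaurent) = x.coeff p • mono p.1 p.2 := by
    simp [mono, AddMonoidAlgebra.smul_single']
  rw [this]
  exact Subalgebra.smul_mem _ (mono_mem (hx p hp)) _

lemma coneA_eq_goodA : coneA = goodA := by
  refine le_antisymm (Algebra.adjoin_le ?_) (fun x hx => good_mem_coneA hx)
  rintro x (rfl | rfl | rfl) <;>
  · intro p hp
    have := Finsupp.support_single_subset hp
    simp only [Finset.mem_singleton] at this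
    subst this
    simp

lemma tdt_single (p : ℕ × ℤ) (c : ℂ) :
    tdt (AddMonoidAlgebra.single p c) = (p.2 : ℂ) • AddMonoidAlgebra.single p c := by
  simp [tdt, Finsupp.lsum_single, AddMonoidAlgebra.lsingle_apply]

lemma tdt_mem {a : PolyLaurent} (ha : a ∈ coneA) : tdt a ∈ coneA := by
  rw [coneA_eq_goodA] at ha ⊢
  have hsum : a = ∑ p ∈ a.coeff.support, AddMonoidAlgebra.single p (a.coeff p) := (AddMonoidAlgebra.sum_coeff_single a).symm
  rw [hsum, map_sum]
  refine sum_mem fun p hp => ?_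
  rw [tdt_single]
  exact Subalgebra.smul_mem _ (by
    rw [← coneA_eq_goodA]
    have : (AddMonoidAlgebra.single p (a.coeff p) : PolyLaurent) = a.coeff p • mono p.1 p.2 := by
      simp [mono, AddMonoidAlgebra.smul_single']
    rw [this]
    exact Subalgebra.smul_mem _ (mono_mem (ha p hp)) _) _

/-- **Derivations of the cone, part 2.**
For `q ∈ ℂ[u, t, t⁻¹]`, the operator `q·(t∂_t)` maps `A` into `A` if and only
if `q ∈ A`. -/
theorem cone_derivations_tdt (q : PolyLaurent) :
    (∀ a ∈ coneA, q * tdt a ∈ coneA) ↔ q ∈ coneA := by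
  constructor
  · intro h
    have h11 : mono 1 1 ∈ coneA := Algebra.subset_adjoin (by simp)
    have h1n : mono 1 (-1) ∈ coneA := Algebra.subset_adjoin (by simp)
    have ht1 : tdt (mono 1 1) = mono 1 1 := by
      rw [mono, tdt_single]; simp [mono]
    have ht2 : tdt (mono 1 (-1)) = -mono 1 (-1) := by
      rw [mono, tdt_single]; simp [mono]
    have hq1 : q * mono 1 1 ∈ coneA := by
      have := h (mono 1 1) h11; rwa [ht1] at this
    have hq2 : q * mono 1 (-1) ∈ coneA := by
      have := h (mono 1 (-1)) h1n
      rw [ht2, mul_neg] at this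
      simpa using neg_mem this
    rw [coneA_eq_goodA] at hq1 hq2 ⊢
    intro p hp
    have hpne : q.coeff p ≠ 0 := Finsupp.mem_support_iff.1 hp
    have key : ∀ (s : ℤ), (q * mono 1 s).coeff (p.1 + 1, p.2 + s) = q.coeff p := by
      intro s
      have := AddMonoidAlgebra.coeff_mul_single_eq_coeff_mul (x := q) (r := (1 : ℂ)) (m := ((1 : ℕ), s))
        (m₁ := (p.1 + 1, p.2 + s)) p (fun a _ => by
          constructor
          · intro hh
            have h1 : a.1 + 1 = p.1 + 1 := congrArg Prod.fst hh
            have h2 : a.2 + s = p.2 + s := congrArg Prod.snd hh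
            exact Prod.ext (by omega) (by omega)
          · rintro rfl; rfl)
      rw [mul_one] at this
      exact this
    have m1 : (p.1 + 1, p.2 + 1) ∈ (q * mono 1 1).coeff.support :=
      Finsupp.mem_support_iff.2 (by rw [key 1]; exact hpne)
    have m2 : (p.1 + 1, p.2 + (-1)) ∈ (q * mono 1 (-1)).coeff.support :=
      Finsupp.mem_support_iff.2 (by rw [key (-1)]; exact hpne)
    have c1 := hq1 _ m1
    have c2 := hq2 _ m2
    simp only at c1 c2
    omega
  · intro hq a ha
    exact mul_mem hq (tdt_mem ha)
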